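/- Let q, p, u, w ∈ ℝ³ with u and w orthonormal, and set n = u × w. Let y(λ, μ) = q + λ u + μ w and suppose y(λ, μ) ≠ p. Define v(λ, μ) = (y(λ, μ) − p)/‖y(λ, μ) − p‖ and x(λ, μ, σ) = y(λ, μ) + σ v(λ, μ). Then the determinant of the Jacobian matrix of x with respect to the ordered variables (σ, λ, μ) equals (1 + σ/‖y(λ, μ) − p‖)² · [v(λ, μ) · n]. -/

import Mathlib

open scoped RealInnerProductSpace

/-- The vector cross product on `EuclideanSpace ℝ (Fin 3)`. -/
noncomputable def cross3 (u v : EuclideanSpace ℝ (Fin 3)) : EuclideanSpace ℝ (Fin 3) :=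
  (WithLp.equiv 2 (Fin 3 → ℝ)).symm
    (crossProduct ((WithLp.equiv 2 (Fin 3 → ℝ)) u) ((WithLp.equiv 2 (Fin 3 → ℝ)) v))

set_option maxHeartbeats 2000000 in
/-- **Jacobian determinant of the sliver parameterization (orthonormal plane coordinates).**
With `y(λ, μ) = q₀ + λ u + μ w` for orthonormal `u, w`, `n = u × w`,
`v(λ, μ) = (y(λ, μ) − p)/‖y(λ, μ) − p‖` and `x(σ, λ, μ) = y(λ, μ) + σ v(λ, μ)`
(a point `q` encodes `(σ, λ, μ) = (q 0, q 1, q 2)`), the Jacobian determinant of `x` with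
respect to `(σ, λ, μ)` equals `(1 + σ/‖y(λ, μ) − p‖)² · [v(λ, μ) · n]` wherever
`y(λ, μ) ≠ p`. -/
theorem det_jacobian_sliver_param_orthonormal
    (q₀ p u w : EuclideanSpace ℝ (Fin 3))
    (hu : ‖u‖ = 1) (hw : ‖w‖ = 1) (huw : ⟪u, w⟫ = 0)
    (n : EuclideanSpace ℝ (Fin 3)) (hn : n = cross3 u w)
    (y : ℝ → ℝ → EuclideanSpace ℝ (Fin 3))
    (hy : ∀ lam mu : ℝ, y lam mu = q₀ + lam • u + mu • w)
    (v : ℝ → ℝ → EuclideanSpace ℝ (Fin 3))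
    (hv : ∀ lam mu : ℝ, v lam mu = ‖y lam mu - p‖⁻¹ • (y lam mu - p))
    (x : EuclideanSpace ℝ (Fin 3) → EuclideanSpace ℝ (Fin 3))
    (hx : ∀ q : EuclideanSpace ℝ (Fin 3), x q = y (q 1) (q 2) + q 0 • v (q 1) (q 2)) :
    ∀ q : EuclideanSpace ℝ (Fin 3), y (q 1) (q 2) ≠ p →
      LinearMap.det (fderiv ℝ x q :
          EuclideanSpace ℝ (Fin 3) →ₗ[ℝ] EuclideanSpace ℝ (Fin 3)) =
        (1 + q 0 / ‖y (q 1) (q 2) - p‖) ^ 2 * ⟪v (q 1) (q 2), n⟫ := by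
  intro q hq
  have hDy : ∀ a b : ℝ, y a b - p = (q₀ - p) + a • u + b • w := by
    intro a b; rw [hy]; abel
  have hxfun : x = fun q' : EuclideanSpace ℝ (Fin 3) =>
      p + (1 + q' 0 * ‖(q₀ - p) + q' 1 • u + q' 2 • w‖⁻¹) •
        ((q₀ - p) + q' 1 • u + q' 2 • w) := by
    funext q'
    rw [hx, hv, hDy, hy]
    module
  simp only [hv, hDy] at hq ⊢
  set d : EuclideanSpace ℝ (Fin 3) := (q₀ - p) + q 1 • u + q 2 • w with hd
  have hdne : d ≠ 0 := by rw [hd, ← hDy]; exact sub_ne_zero.mpr hq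
  have hr : ‖d‖ ≠ 0 := norm_ne_zero_iff.mpr hdne
  have hproj : ∀ i : Fin 3, HasFDerivAt (fun q' : EuclideanSpace ℝ (Fin 3) => q' i)
      (EuclideanSpace.proj i : EuclideanSpace ℝ (Fin 3) →L[ℝ] ℝ) q := by
    intro i
    exact (EuclideanSpace.proj i : EuclideanSpace ℝ (Fin 3) →L[ℝ] ℝ).hasFDerivAt
  set L : EuclideanSpace ℝ (Fin 3) →L[ℝ] EuclideanSpace ℝ (Fin 3) :=
    (EuclideanSpace.proj (1 : Fin 3)).smulRight u +
      (EuclideanSpace.proj (2 : Fin 3)).smulRight w with hL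
  have hD : HasFDerivAt
      (fun q' : EuclideanSpace ℝ (Fin 3) => (q₀ - p) + q' 1 • u + q' 2 • w) L q := by
    have h1 := (hproj 1).smul_const u
    have h2 := (hproj 2).smul_const w
    have h3 := ((hasFDerivAt_const (q₀ - p) q).add h1).add h2
    exact h3.congr_fderiv (by simp [hL])
  have hsq : HasFDerivAt
      (fun q' : EuclideanSpace ℝ (Fin 3) => ‖(q₀ - p) + q' 1 • u + q' 2 • w‖ ^ 2)
      (2 • ((innerSL ℝ) d).comp L) q := by
    simpa [← hd] using hD.norm_sq
  have hrpos : (0:ℝ) < ‖d‖ := norm_pos_iff.mpr hdne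
  have hs2 : (‖d‖ : ℝ) ^ 2 ≠ 0 := pow_ne_zero _ hr
  have hsqrtne : Real.sqrt (‖d‖ ^ 2) ≠ 0 := by
    rw [Real.sqrt_sq hrpos.le]; exact hr
  have hninv : HasFDerivAt
      (fun q' : EuclideanSpace ℝ (Fin 3) => ‖(q₀ - p) + q' 1 • u + q' 2 • w‖⁻¹)
      ((-(1 / (2 * ‖d‖)) / ‖d‖ ^ 2) • (2 • ((innerSL ℝ) d).comp L)) q := by
    have hsqrt : HasDerivAt (fun t : ℝ => (Real.sqrt t)⁻¹)
        (-(1 / (2 * Real.sqrt (‖d‖ ^ 2))) / Real.sqrt (‖d‖ ^ 2) ^ 2) (‖d‖ ^ 2) :=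
      (Real.hasDerivAt_sqrt hs2).inv hsqrtne
    have hcomp := hsqrt.comp_hasFDerivAt q hsq
    simpa [Function.comp_def, Real.sqrt_sq, norm_nonneg, Real.sqrt_sq hrpos.le] using hcomp
  have hA : HasFDerivAt (fun q' : EuclideanSpace ℝ (Fin 3) =>
      p + (1 + q' 0 * ‖(q₀ - p) + q' 1 • u + q' 2 • w‖⁻¹) •
        ((q₀ - p) + q' 1 • u + q' 2 • w))
      ((0 : EuclideanSpace ℝ (Fin 3) →L[ℝ] EuclideanSpace ℝ (Fin 3)) +
        ((1 + q 0 * ‖d‖⁻¹) • L +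
          ((0 : EuclideanSpace ℝ (Fin 3) →L[ℝ] ℝ) +
            (q 0 • ((-(1 / (2 * ‖d‖)) / ‖d‖ ^ 2) • (2 • ((innerSL ℝ) d).comp L)) +
              ‖d‖⁻¹ • (EuclideanSpace.proj (0 : Fin 3) :
                EuclideanSpace ℝ (Fin 3) →L[ℝ] ℝ))).smulRight d)) q :=
    (hasFDerivAt_const p q).add
      (((hasFDerivAt_const (1:ℝ) q).add ((hproj 0).mul hninv)).smul hD)
  rw [hxfun, hA.fderiv]
  rw [← LinearMap.det_toMatrix (EuclideanSpace.basisFun (Fin 3) ℝ).toBasis,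
    Matrix.det_fin_three]
  simp only [LinearMap.toMatrix_apply, OrthonormalBasis.coe_toBasis,
    OrthonormalBasis.coe_toBasis_repr_apply, EuclideanSpace.basisFun_repr,
    EuclideanSpace.basisFun_apply, ContinuousLinearMap.coe_coe,
    ContinuousLinearMap.add_apply, ContinuousLinearMap.zero_apply,
    ContinuousLinearMap.smul_apply, ContinuousLinearMap.smulRight_apply,
    ContinuousLinearMap.comp_apply, innerSL_apply_apply, PiLp.proj_apply,
    PiLp.inner_apply, RCLike.inner_apply, conj_trivial, Fin.sum_univ_three,
    EuclideanSpace.single_apply, PiLp.add_apply, PiLp.sub_apply, PiLp.smul_apply,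
    smul_eq_mul, hL, hn, cross3, cross_apply, WithLp.equiv_symm_apply, PiLp.toLp_apply,
    WithLp.equiv_apply, Matrix.cons_val_zero, Matrix.cons_val_one, Matrix.head_cons,
    Matrix.cons_val_two, Matrix.tail_cons, hd, Fin.isValue, Fin.reduceEq,
    if_true, if_false, Pi.zero_apply, PiLp.zero_apply, nsmul_eq_mul, one_mul, mul_one,
    mul_zero, zero_mul, add_zero, zero_add, ite_true, ite_false]
  rw [hd] at hr
  push_cast
  generalize q₀ 0 - p 0 + q 1 * u 0 + q 2 * w 0 = d0
  generalize q₀ 1 - p 1 + q 1 * u 1 + q 2 * w 1 = d1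
  generalize q₀ 2 - p 2 + q 1 * u 2 + q 2 * w 2 = d2
  field_simp
  ring
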